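/- Let X be a metric space with a Borel probability measure μ such that every nonempty open set has positive μ-measure, let S be an ergodic invertible measure-preserving transformation of (X, μ), and let f : X → ℤ be integrable with ∫ f dμ = 0. Then for μ-almost every x ∈ X there exists a sequence of positive integers n_k → ∞ such that S^{n_k} x → x and ∑_{i=0}^{n_k - 1} f(S^i x) = 0 for every k. -/

import Mathlib

open MeasureTheory Filter Topology
open scoped Classical

section Hopf

variable {X : Type*} [MeasurableSpace X] {μ : Measure X}
variable {S : X → X} {g : X → ℝ}

lemma KA.measurable_birkhoffSum (hS : Measurable S) (hg : Measurable g) (n : ℕ) :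
    Measurable (birkhoffSum S g n) := by
  unfold birkhoffSum
  exact Finset.measurable_sum _ (fun i _ => hg.comp (hS.iterate i))

lemma KA.integrable_birkhoffSum (hS : MeasurePreserving S μ μ) (hg : Integrable g μ) (n : ℕ) :
    Integrable (birkhoffSum S g n) μ := by
  unfold birkhoffSum
  exact integrable_finset_sum _ (fun i _ =>
    (hS.iterate i).integrable_comp hg.aestronglyMeasurable |>.mpr hg)

/-- running maximum `max_{0 ≤ k ≤ n} birkhoffSum S g k`. -/
noncomputable def KA.maxSum (S : X → X) (g : X → ℝ) : ℕ → X → ℝ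
  | 0 => fun _ => 0
  | (n+1) => fun x => max (KA.maxSum S g n x) (birkhoffSum S g (n+1) x)

namespace KA

lemma maxSum_nonneg (n : ℕ) (x : X) : 0 ≤ maxSum S g n x := by
  induction n with
  | zero => simp [maxSum]
  | succ n ih => exact le_trans ih (le_max_left _ _)

lemma maxSum_mono (x : X) : Monotone (fun n => maxSum S g n x) := by
  apply monotone_nat_of_le_succ
  intro n
  exact le_max_left _ _

lemma birkhoffSum_le_maxSum (n : ℕ) (x : X) : birkhoffSum S g n x ≤ maxSum S g n x := by
  cases n with
  | zero => simp [maxSum, birkhoffSum_zero]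
  | succ n => exact le_max_right _ _

lemma birkhoffSum_le_maxSum_of_le {k n : ℕ} (h : k ≤ n) (x : X) :
    birkhoffSum S g k x ≤ maxSum S g n x :=
  (birkhoffSum_le_maxSum k x).trans (maxSum_mono x h)

lemma measurable_maxSum (hS : Measurable S) (hg : Measurable g) (n : ℕ) :
    Measurable (maxSum S g n) := by
  induction n with
  | zero => exact measurable_const
  | succ n ih => exact ih.max (measurable_birkhoffSum hS hg (n+1))

lemma integrable_maxSum (hS : MeasurePreserving S μ μ) (hSm : Measurable S)
    (hg : Integrable g μ) (hgm : Measurable g) (n : ℕ) :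
    Integrable (maxSum S g n) μ := by
  induction n with
  | zero => exact (integrable_zero _ _ _)
  | succ n ih =>
    have := ih.sup (integrable_birkhoffSum hS hg (n+1))
    simpa [maxSum, max_def, Pi.sup_def] using this

lemma maxSum_key (n : ℕ) (x : X) :
    maxSum S g n x ≤ max 0 (g x + maxSum S g n (S x)) := by
  induction n with
  | zero => simp [maxSum]
  | succ n ih =>
    refine max_le ?_ ?_
    · refine ih.trans (max_le_max le_rfl ?_)
      have := maxSum_mono (S := S) (g := g) (S x) (Nat.le_succ n)
      simpa using by linarith
    · have h1 : birkhoffSum S g (n+1) x = g x + birkhoffSum S g n (S x) :=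
        birkhoffSum_succ' S g n x
      have h2 : birkhoffSum S g n (S x) ≤ maxSum S g (n+1) (S x) :=
        birkhoffSum_le_maxSum_of_le (Nat.le_succ n) (S x)
      refine le_trans ?_ (le_max_right _ _)
      linarith

/-- Hopf's maximal ergodic theorem. -/
lemma hopf_maximal (hS : MeasurePreserving S μ μ) (hSm : Measurable S)
    (hg : Integrable g μ) (hgm : Measurable g) (n : ℕ) :
    0 ≤ ∫ x in {x | 0 < maxSum S g n x}, g x ∂μ := by
  set E := {x | 0 < maxSum S g n x} with hE
  have hEm : MeasurableSet E := measurableSet_lt measurable_const (measurable_maxSum hSm hgm n)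
  have hMi : Integrable (maxSum S g n) μ := integrable_maxSum hS hSm hg hgm n
  have hMSi : Integrable (fun x => maxSum S g n (S x)) μ :=
    (hS.integrable_comp hMi.aestronglyMeasurable).mpr hMi
  have key : ∀ x ∈ E, maxSum S g n x - maxSum S g n (S x) ≤ g x := by
    intro x hx
    have h := maxSum_key (S := S) (g := g) n x
    rcases le_max_iff.1 h with h' | h'
    · exact absurd (lt_of_lt_of_le hx h') (lt_irrefl 0)
    · have := maxSum_nonneg (g := g) (S := S) n (S x)
      linarith
  have step1 : ∫ x in E, (maxSum S g n x - maxSum S g n (S x)) ∂μ ≤ ∫ x in E, g x ∂μ := by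
    apply setIntegral_mono_on ((hMi.sub hMSi).integrableOn) (hg.integrableOn) hEm
    exact key
  have step2 : ∫ x in E, (maxSum S g n x - maxSum S g n (S x)) ∂μ
      = ∫ x in E, maxSum S g n x ∂μ - ∫ x in E, maxSum S g n (S x) ∂μ :=
    integral_sub hMi.integrableOn hMSi.integrableOn
  have e1 : ∫ x in E, maxSum S g n x ∂μ = ∫ x, maxSum S g n x ∂μ := by
    rw [← integral_add_compl hEm hMi]
    have : ∫ x in Eᶜ, maxSum S g n x ∂μ = 0 := by
      apply setIntegral_eq_zero_of_forall_eq_zero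
      intro x hx
      have : ¬ (0 < maxSum S g n x) := hx
      have h2 := maxSum_nonneg (g := g) (S := S) n x
      linarith
    linarith
  have e2 : ∫ x in E, maxSum S g n (S x) ∂μ ≤ ∫ x, maxSum S g n (S x) ∂μ := by
    apply setIntegral_le_integral hMSi
    filter_upwards with x using maxSum_nonneg n (S x)
  have e3 : ∫ x, maxSum S g n (S x) ∂μ = ∫ x, maxSum S g n x ∂μ := by
    have : ∫ x, maxSum S g n x ∂(μ.map S) = ∫ x, maxSum S g n x ∂μ := by rw [hS.map_eq]
    rw [← this, integral_map hSm.aemeasurable]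
    rw [hS.map_eq]
    exact hMi.aestronglyMeasurable
  linarith


lemma iterate_mem_invariant {A : Set X} (hinv : S ⁻¹' A = A) (i : ℕ) {x : X} :
    S^[i] x ∈ A ↔ x ∈ A := by
  induction i with
  | zero => simp
  | succ i ih =>
    rw [Function.iterate_succ_apply', ← ih]
    constructor
    · intro h
      have : S^[i] x ∈ S ⁻¹' A := h
      rwa [hinv] at this
    · intro h
      have : S^[i] x ∈ S ⁻¹' A := by rwa [hinv]
      exact this

lemma birkhoffSum_indicator {A : Set X} (hinv : S ⁻¹' A = A) (n : ℕ) (x : X) :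
    birkhoffSum S (A.indicator g) n x
      = if x ∈ A then birkhoffSum S g n x else 0 := by
  unfold birkhoffSum
  by_cases hx : x ∈ A
  · simp only [hx, if_true]
    apply Finset.sum_congr rfl
    intro i _
    have : S^[i] x ∈ A := (iterate_mem_invariant hinv i).mpr hx
    simp [Set.indicator_of_mem this]
  · simp only [hx, if_false]
    apply Finset.sum_eq_zero
    intro i _
    have : S^[i] x ∉ A := fun h => hx ((iterate_mem_invariant hinv i).mp h)
    simp [Set.indicator_of_notMem this]

lemma maxSum_indicator {A : Set X} (hinv : S ⁻¹' A = A) (n : ℕ) (x : X) :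
    maxSum S (A.indicator g) n x = if x ∈ A then maxSum S g n x else 0 := by
  induction n with
  | zero => simp [maxSum]
  | succ n ih =>
    simp only [maxSum, ih, birkhoffSum_indicator hinv]
    by_cases hx : x ∈ A <;> simp [hx]

/-- Hopf maximal ergodic theorem restricted to a strictly invariant set. -/
lemma hopf_invariant (hS : MeasurePreserving S μ μ) (hSm : Measurable S)
    (hg : Integrable g μ) (hgm : Measurable g)
    {A : Set X} (hA : MeasurableSet A) (hinv : S ⁻¹' A = A) (n : ℕ) :
    0 ≤ ∫ x in A ∩ {x | 0 < maxSum S g n x}, g x ∂μ := by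
  have hgi' : Integrable (A.indicator g) μ := hg.indicator hA
  have hgm' : Measurable (A.indicator g) := hgm.indicator hA
  have h := hopf_maximal hS hSm hgi' hgm' n
  have hset : {x | 0 < maxSum S (A.indicator g) n x}
      = A ∩ {x | 0 < maxSum S g n x} := by
    ext x
    simp only [Set.mem_setOf_eq, Set.mem_inter_iff, maxSum_indicator hinv]
    by_cases hx : x ∈ A <;> simp [hx]
  rw [hset] at h
  refine h.trans (le_of_eq ?_)
  apply setIntegral_congr_fun (hA.inter (measurableSet_lt measurable_const
    (measurable_maxSum hSm hgm n)))
  intro x hx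
  simp [Set.indicator_of_mem hx.1]

/-- Birkhoff sums of `g - β`. -/
lemma birkhoffSum_sub_const (n : ℕ) (x : X) (β : ℝ) :
    birkhoffSum S (fun y => g y - β) n x = birkhoffSum S g n x - n * β := by
  unfold birkhoffSum
  rw [Finset.sum_sub_distrib, Finset.sum_const, Finset.card_range, nsmul_eq_mul]

/-- Birkhoff-type upper bound from ergodicity: if `∫ g < α` then almost surely
the Birkhoff sums eventually stay below `α n + C` for some constant. -/
lemma birkhoff_upper [IsProbabilityMeasure μ] (hS : Ergodic S μ) (hSm : Measurable S)
    (hg : Integrable g μ) (hgm : Measurable g) {α : ℝ} (hα : ∫ x, g x ∂μ < α) :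
    ∀ᵐ x ∂μ, ∃ C : ℤ, ∀ᶠ n in atTop, birkhoffSum S g n x < α * n + C := by
  have hpres : MeasurePreserving S μ μ := hS.toMeasurePreserving
  set A : Set X := {x | ∀ C : ℤ, ∃ᶠ n in atTop, α * n + C ≤ birkhoffSum S g n x} with hA
  have hAm : MeasurableSet A := by
    have h1 : ∀ C : ℤ, MeasurableSet {x | ∃ᶠ n in atTop, α * n + C ≤ birkhoffSum S g n x} := by
      intro C
      have he : {x | ∃ᶠ n in atTop, α * n + C ≤ birkhoffSum S g n x}
          = ⋂ N : ℕ, ⋃ n : ℕ, ⋃ _ : N ≤ n, {x | α * n + C ≤ birkhoffSum S g n x} := by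
        ext x
        simp [Filter.frequently_atTop]
      rw [he]
      exact MeasurableSet.iInter fun N => MeasurableSet.iUnion fun n =>
        MeasurableSet.iUnion fun _ => measurableSet_le measurable_const
          (measurable_birkhoffSum hSm hgm n)
    have : A = ⋂ C : ℤ, {x | ∃ᶠ n in atTop, α * n + C ≤ birkhoffSum S g n x} := by
      ext x; simp [hA, Set.mem_iInter]
    rw [this]
    exact MeasurableSet.iInter h1
  have hinv : S ⁻¹' A = A := by
    ext x
    simp only [Set.mem_preimage, hA, Set.mem_setOf_eq]
    constructor
    · intro h C
      have h' := h ⌈(C : ℝ) + α - g x⌉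
      rw [Filter.frequently_atTop] at h' ⊢
      intro N
      obtain ⟨n, hn, hle⟩ := h' N
      refine ⟨n + 1, by omega, ?_⟩
      have hb : birkhoffSum S g (n + 1) x = g x + birkhoffSum S g n (S x) :=
        birkhoffSum_succ' S g n x
      have hceil : (C : ℝ) + α - g x ≤ (⌈(C : ℝ) + α - g x⌉ : ℝ) := Int.le_ceil _
      push_cast
      push_cast at hle
      linarith
    · intro h C
      have h' := h ⌈(C : ℝ) - α + g x⌉
      rw [Filter.frequently_atTop] at h' ⊢
      intro N
      obtain ⟨m, hm, hle⟩ := h' (N + 1)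
      obtain ⟨n, rfl⟩ : ∃ n, m = n + 1 := ⟨m - 1, by omega⟩
      refine ⟨n, by omega, ?_⟩
      have hb : birkhoffSum S g (n + 1) x = g x + birkhoffSum S g n (S x) :=
        birkhoffSum_succ' S g n x
      have hceil : (C : ℝ) - α + g x ≤ (⌈(C : ℝ) - α + g x⌉ : ℝ) := Int.le_ceil _
      push_cast
      push_cast at hle
      linarith
  rcases hS.toPreErgodic.measure_self_or_compl_eq_zero hAm hinv with h0 | h1
  · -- μ A = 0 : done
    have : ∀ᵐ x ∂μ, x ∉ A := by
      rw [ae_iff]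
      simpa using h0
    filter_upwards [this] with x hx
    simp only [hA, Set.mem_setOf_eq, not_forall] at hx
    obtain ⟨C, hC⟩ := hx
    refine ⟨C, ?_⟩
    rw [Filter.not_frequently] at hC
    filter_upwards [hC] with n hn
    exact lt_of_not_ge hn
  · -- μ Aᶜ = 0 : derive a contradiction
    exfalso
    set β : ℝ := (∫ x, g x ∂μ + α) / 2 with hβ
    have hβ1 : ∫ x, g x ∂μ < β := by rw [hβ]; linarith
    have hβ2 : β < α := by rw [hβ]; linarith
    set g' : X → ℝ := fun x => g x - β with hg'def
    have hg'i : Integrable g' μ := hg.sub (integrable_const β)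
    have hg'm : Measurable g' := hgm.sub measurable_const
    set s : ℕ → Set X := fun n => A ∩ {x | 0 < maxSum S g' n x} with hs
    have hsm : ∀ n, MeasurableSet (s n) := fun n =>
      hAm.inter (measurableSet_lt measurable_const (measurable_maxSum hSm hg'm n))
    have hmono : Monotone s := by
      intro a b hab x hx
      exact ⟨hx.1, lt_of_lt_of_le hx.2 (maxSum_mono (S := S) (g := g') x hab)⟩
    have hunion : ⋃ n, s n = A := by
      apply Set.Subset.antisymm
      · exact Set.iUnion_subset fun n => Set.inter_subset_left
      · intro x hx
        have h0' := hx (0 : ℤ)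
        rw [Filter.frequently_atTop] at h0'
        obtain ⟨n, hn1, hle⟩ := h0' 1
        refine Set.mem_iUnion.2 ⟨n, hx, ?_⟩
        have hb : birkhoffSum S g' n x = birkhoffSum S g n x - n * β :=
          birkhoffSum_sub_const n x β
        have : 0 < birkhoffSum S g' n x := by
          have hcast : (1 : ℝ) ≤ (n : ℝ) := by exact_mod_cast hn1
          push_cast at hle
          nlinarith
        exact lt_of_lt_of_le this (birkhoffSum_le_maxSum (g := g') n x)
    have hInt : ∀ n, 0 ≤ ∫ x in s n, g' x ∂μ := fun n =>
      hopf_invariant hpres hSm hg'i hg'm hAm hinv n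
    have htend := tendsto_setIntegral_of_monotone hsm hmono (hg'i.integrableOn)
    rw [hunion] at htend
    have hlim : 0 ≤ ∫ x in A, g' x ∂μ := ge_of_tendsto' htend hInt
    have hcompl : ∫ x in Aᶜ, g' x ∂μ = 0 := by
      rw [Measure.restrict_eq_zero.mpr h1, integral_zero_measure]
    have htotal : ∫ x in A, g' x ∂μ = ∫ x, g' x ∂μ := by
      rw [← integral_add_compl hAm hg'i, hcompl, add_zero]
    have hval : ∫ x, g' x ∂μ = ∫ x, g x ∂μ - β := by
      rw [hg'def]
      rw [integral_sub hg (integrable_const β), integral_const]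
      simp
    rw [htotal, hval] at hlim
    linarith


lemma exists_two_natAbs_ge {s : Finset ℕ} {v : ℕ → ℤ} (hne : s.Nonempty)
    (hinj : Set.InjOn v s) (h0 : ∀ i ∈ s, v i ≠ 0) :
    ∃ i ∈ s, s.card ≤ 2 * (v i).natAbs := by
  by_contra hcon
  push_neg at hcon
  set m : ℕ := (s.card - 1) / 2 with hm
  have hbound : ∀ i ∈ s, (v i).natAbs ≤ m := by
    intro i hi
    have := hcon i hi
    rw [hm, Nat.le_div_iff_mul_le (by norm_num : 0 < 2)]
    omega
  have himg : s.image v ⊆ (Finset.Icc (-(m : ℤ)) m).erase 0 := by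
    intro k hk
    rw [Finset.mem_image] at hk
    obtain ⟨i, hi, rfl⟩ := hk
    rw [Finset.mem_erase, Finset.mem_Icc]
    refine ⟨h0 i hi, ?_, ?_⟩
    · have := hbound i hi
      omega
    · have := hbound i hi
      omega
  have hcard1 : (s.image v).card = s.card := Finset.card_image_of_injOn hinj
  have hcard2 : ((Finset.Icc (-(m : ℤ)) m).erase 0).card = 2 * m := by
    rw [Finset.card_erase_of_mem (by rw [Finset.mem_Icc]; omega), Int.card_Icc]
    omega
  have hle := Finset.card_le_card himg
  rw [hcard1, hcard2] at hle
  have hs1 : 1 ≤ s.card := Finset.card_pos.mpr hne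
  omega

lemma birkhoffSum_intCast {f : X → ℤ} (n : ℕ) (x : X) :
    birkhoffSum S (fun y => ((f y : ℤ) : ℝ)) n x = ((birkhoffSum S f n x : ℤ) : ℝ) := by
  unfold birkhoffSum
  push_cast
  rfl

/-- **Atkinson's theorem**: almost every point of `B` returns to `B` with zero
Birkhoff sum. -/
lemma atkinson_returns [IsProbabilityMeasure μ] (hS : Ergodic S μ) (hSm : Measurable S)
    {f : X → ℤ} (hfm : Measurable f) (hfi : Integrable (fun x => (f x : ℝ)) μ)
    (hf0 : ∫ x, (f x : ℝ) ∂μ = 0) {B : Set X} (hB : MeasurableSet B) :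
    ∀ᵐ x ∂μ, x ∈ B → ∃ n, 0 < n ∧ S^[n] x ∈ B ∧ birkhoffSum S f n x = 0 := by
  classical
  set G : Set X := {x | x ∈ B ∧ ∀ n, 0 < n → S^[n] x ∈ B → birkhoffSum S f n x ≠ 0} with hG
  have hsum_meas : ∀ n : ℕ, Measurable (fun x => birkhoffSum S f n x) := by
    intro n
    unfold birkhoffSum
    exact Finset.measurable_sum _ (fun i _ => hfm.comp (hSm.iterate i))
  have hGm : MeasurableSet G := by
    have : G = B ∩ ⋂ n : ℕ, ⋂ _ : 0 < n,
        ((S^[n] ⁻¹' B) ∩ {x | birkhoffSum S f n x = 0})ᶜ := by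
      ext x
      simp only [hG, Set.mem_setOf_eq, Set.mem_inter_iff, Set.mem_iInter, Set.mem_compl_iff,
        Set.mem_preimage, not_and]
      all_goals tauto
    rw [this]
    exact hB.inter (MeasurableSet.iInter fun n => MeasurableSet.iInter fun _ =>
      (((hSm.iterate n) hB).inter ((hsum_meas n) (measurableSet_singleton 0))).compl)
  -- main claim : `μ G = 0`
  have hG0 : μ G = 0 := by
    by_contra hG0
    set b : ℝ := (μ G).toReal with hb
    have hbpos : 0 < b := ENNReal.toReal_pos hG0 (measure_ne_top μ G)
    -- a.e. facts
    have hind : ∫ x, (-(G.indicator (fun _ => (1:ℝ)) x)) ∂μ = -b := by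
      rw [integral_neg, integral_indicator_const (1:ℝ) hGm]
      simp [hb, Measure.real]
    have h1 : ∀ᵐ x ∂μ, ∃ C : ℤ, ∀ᶠ n in atTop,
        birkhoffSum S (fun y => -(G.indicator (fun _ => (1:ℝ)) y)) n x < (-(b/2)) * n + C := by
      apply birkhoff_upper hS hSm
      · exact ((integrable_const (1:ℝ)).indicator hGm).neg
      · exact ((measurable_const (a := (1:ℝ))).indicator hGm).neg
      · rw [hind]; linarith
    have h2 : ∀ᵐ x ∂μ, ∀ m : ℕ, ∃ C : ℤ, ∀ᶠ n in atTop,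
        birkhoffSum S (fun y => ((f y : ℤ) : ℝ)) n x < (1/(m+1)) * n + C := by
      rw [ae_all_iff]
      intro m
      have hpos : (0:ℝ) < 1/(m+1) := by positivity
      exact birkhoff_upper hS hSm hfi (measurable_from_top.comp hfm) (by rw [hf0]; exact hpos)
    have h3 : ∀ᵐ x ∂μ, ∀ m : ℕ, ∃ C : ℤ, ∀ᶠ n in atTop,
        birkhoffSum S (fun y => -((f y : ℤ) : ℝ)) n x < (1/(m+1)) * n + C := by
      rw [ae_all_iff]
      intro m
      have hz : ∫ x, -((f x : ℤ) : ℝ) ∂μ < 1/(m+1) := by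
        rw [integral_neg, hf0, neg_zero]
        positivity
      exact birkhoff_upper hS hSm hfi.neg ((measurable_from_top.comp hfm).neg) hz
    -- pick a point of `G` satisfying all a.e. facts
    have hae := (h1.and (h2.and h3))
    have hGE : μ (G ∩ {x | (∃ C : ℤ, ∀ᶠ n in atTop,
        birkhoffSum S (fun y => -(G.indicator (fun _ => (1:ℝ)) y)) n x < (-(b/2)) * n + C) ∧
        (∀ m : ℕ, ∃ C : ℤ, ∀ᶠ n in atTop,
          birkhoffSum S (fun y => ((f y : ℤ) : ℝ)) n x < (1/(m+1)) * n + C) ∧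
        (∀ m : ℕ, ∃ C : ℤ, ∀ᶠ n in atTop,
          birkhoffSum S (fun y => -((f y : ℤ) : ℝ)) n x < (1/(m+1)) * n + C)}) = μ G := by
      apply measure_inter_conull
      rw [Set.compl_setOf]
      exact ae_iff.mp hae
    have hne : (G ∩ _).Nonempty := nonempty_of_measure_ne_zero (by rw [hGE]; exact hG0)
    obtain ⟨x, hxG, hx1, hx2, hx3⟩ := hne
    obtain ⟨C1, hC1⟩ := hx1
    obtain ⟨m, hm⟩ := exists_nat_one_div_lt (show (0:ℝ) < b/8 by linarith)
    obtain ⟨C2, hC2⟩ := hx2 m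
    obtain ⟨C3, hC3⟩ := hx3 m
    have hneg : ∀ (g : X → ℝ) (n : ℕ), birkhoffSum S (fun y => -(g y)) n x
        = -birkhoffSum S g n x := by
      intro g n
      unfold birkhoffSum
      rw [← Finset.sum_neg_distrib]
    have hcnt : ∀ n : ℕ, birkhoffSum S (G.indicator (fun _ => (1:ℝ))) n x
        = (((Finset.range n).filter (fun i => S^[i] x ∈ G)).card : ℝ) := by
      intro n
      unfold birkhoffSum
      simp only [Set.indicator_apply]
      rw [Finset.sum_boole]
      congr
    rw [Filter.eventually_atTop] at hC1 hC2 hC3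
    obtain ⟨N1, hN1⟩ := hC1
    obtain ⟨N2, hN2⟩ := hC2
    obtain ⟨N3, hN3⟩ := hC3
    set N0 : ℕ := max N2 N3 with hN0
    set fR : X → ℝ := fun y => ((f y : ℤ) : ℝ) with hfR
    set K : ℝ := ∑ i ∈ Finset.range N0, |birkhoffSum S fR i x| with hKdef
    set D : ℝ := |(C2:ℝ)| + |(C3:ℝ)| + K + 1 with hD
    have hDpos : 0 < D := by
      have : 0 ≤ K := Finset.sum_nonneg fun i _ => abs_nonneg _
      have h2' : 0 ≤ |(C2:ℝ)| := abs_nonneg _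
      have h3' : 0 ≤ |(C3:ℝ)| := abs_nonneg _
      linarith
    have habs : ∀ n : ℕ, ∀ i ≤ n, |birkhoffSum S fR i x| ≤ (b/8) * n + D := by
      intro n i hin
      have hbn : (0:ℝ) ≤ (b/8) * n := by positivity
      by_cases hi : i < N0
      · have hK : |birkhoffSum S fR i x| ≤ K :=
          Finset.single_le_sum (f := fun i => |birkhoffSum S fR i x|)
            (fun j _ => abs_nonneg _) (Finset.mem_range.mpr hi)
        rw [hD]
        have h2' : 0 ≤ |(C2:ℝ)| := abs_nonneg _
        have h3' : 0 ≤ |(C3:ℝ)| := abs_nonneg _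
        linarith
      · push_neg at hi
        have hi2 : N2 ≤ i := le_trans (le_max_left _ _) hi
        have hi3 : N3 ≤ i := le_trans (le_max_right _ _) hi
        have hup := hN2 i hi2
        have hdn := hN3 i hi3
        rw [hneg] at hdn
        have hcast : (i:ℝ) ≤ (n:ℝ) := by exact_mod_cast hin
        have hipos : (0:ℝ) ≤ (i:ℝ) := Nat.cast_nonneg i
        have hmb : (1/(m+1)) * (i:ℝ) ≤ (b/8) * (i:ℝ) := by
          apply mul_le_mul_of_nonneg_right (le_of_lt hm) hipos
        have hb8 : (b/8) * (i:ℝ) ≤ (b/8) * (n:ℝ) := by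
          apply mul_le_mul_of_nonneg_left hcast (by linarith)
        rw [abs_le]
        constructor
        · have h3' : |(C3:ℝ)| ≥ (C3:ℝ) := le_abs_self _
          rw [hD]
          have h2' : 0 ≤ |(C2:ℝ)| := abs_nonneg _
          have hK0 : 0 ≤ K := Finset.sum_nonneg fun j _ => abs_nonneg _
          linarith
        · have h2' : |(C2:ℝ)| ≥ (C2:ℝ) := le_abs_self _
          rw [hD]
          have h3' : 0 ≤ |(C3:ℝ)| := abs_nonneg _
          have hK0 : 0 ≤ K := Finset.sum_nonneg fun j _ => abs_nonneg _
          linarith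
    set F : ℕ → Finset ℕ := fun n => (Finset.range n).filter (fun i => 0 < i ∧ S^[i] x ∈ G)
      with hF
    have hcard_ge : ∀ n : ℕ, (((Finset.range n).filter (fun i => S^[i] x ∈ G)).card : ℝ)
        ≤ (F n).card + 1 := by
      intro n
      have hsub : (Finset.range n).filter (fun i => S^[i] x ∈ G) ⊆ insert 0 (F n) := by
        intro i hi
        rw [Finset.mem_filter] at hi
        rcases Nat.eq_zero_or_pos i with h0 | h0
        · rw [h0]; exact Finset.mem_insert_self _ _
        · exact Finset.mem_insert_of_mem (by rw [hF, Finset.mem_filter]; exact ⟨hi.1, h0, hi.2⟩)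
      have := Finset.card_le_card hsub
      have h2 := Finset.card_insert_le 0 (F n)
      have : ((Finset.range n).filter (fun i => S^[i] x ∈ G)).card ≤ (F n).card + 1 := by omega
      exact_mod_cast this
    have hvne : ∀ n : ℕ, ∀ i ∈ F n, birkhoffSum S f i x ≠ 0 := by
      intro n i hi
      rw [hF, Finset.mem_filter] at hi
      exact hxG.2 i hi.2.1 hi.2.2.1
    have hinj : ∀ n : ℕ, Set.InjOn (fun i => birkhoffSum S f i x) (F n) := by
      intro n
      have key : ∀ i j : ℕ, i ∈ F n → j ∈ F n → i < j →
          birkhoffSum S f i x ≠ birkhoffSum S f j x := by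
        intro i j hi hj hij heq
        rw [hF, Finset.mem_filter] at hi hj
        have hadd : birkhoffSum S f (i + (j - i)) x
            = birkhoffSum S f i x + birkhoffSum S f (j - i) (S^[i] x) :=
          birkhoffSum_add S f i (j - i) x
        rw [show i + (j - i) = j by omega] at hadd
        have hzero : birkhoffSum S f (j - i) (S^[i] x) = 0 := by
          rw [hadd] at heq
          linarith [heq]
        have hGi : S^[i] x ∈ G := hi.2.2
        have hit : S^[j - i] (S^[i] x) = S^[j] x := by
          rw [← Function.iterate_add_apply]
          congr 1
          omega
        have hjB : S^[j - i] (S^[i] x) ∈ B := by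
          rw [hit]
          exact hj.2.2.1
        exact hGi.2 (j - i) (by omega) hjB hzero
      intro i hi j hj heq
      rcases lt_trichotomy i j with h | h | h
      · exact absurd heq (key i j hi hj h)
      · exact h
      · exact absurd heq.symm (key j i hj hi h)
    -- choose a large `n`
    obtain ⟨n, hn⟩ := exists_nat_gt (max (N1:ℝ)
      (max ((8/b) * (D + ((C1:ℝ)+1)/2)) ((2/b) * ((C1:ℝ) + 3))))
    have hnN1 : N1 ≤ n := by
      have := lt_of_le_of_lt (le_max_left _ _) hn
      exact_mod_cast this.le
    have hn2 : D + ((C1:ℝ)+1)/2 < (b/8) * n := by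
      have h := lt_of_le_of_lt (le_trans (le_max_left _ _) (le_max_right (N1:ℝ) _)) hn
      have hb' : 0 < b/8 := by linarith
      calc D + ((C1:ℝ)+1)/2 = (b/8) * ((8/b) * (D + ((C1:ℝ)+1)/2)) := by
            field_simp
          _ < (b/8) * n := by
            apply mul_lt_mul_of_pos_left h hb'
    have hn3 : (C1:ℝ) + 3 < (b/2) * n := by
      have h := lt_of_le_of_lt (le_trans (le_max_right _ _) (le_max_right (N1:ℝ) _)) hn
      have hb' : 0 < b/2 := by linarith
      calc (C1:ℝ) + 3 = (b/2) * ((2/b) * ((C1:ℝ) + 3)) := by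
            field_simp
        _ < (b/2) * n := by apply mul_lt_mul_of_pos_left h hb'
    -- count of visits is large
    have hcount := hN1 n hnN1
    rw [hneg, hcnt] at hcount
    have hcnt_lb : (b/2) * n - C1
        < (((Finset.range n).filter (fun i => S^[i] x ∈ G)).card : ℝ) := by linarith
    have hcardF : (b/2) * n - C1 - 1 < ((F n).card : ℝ) := by
      have := hcard_ge n
      linarith
    have hFne : (F n).Nonempty := by
      rw [← Finset.card_pos]
      by_contra hcon
      push_neg at hcon
      have : (F n).card = 0 := by omega
      rw [this] at hcardF
      norm_num at hcardF
      linarith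
    obtain ⟨i, hiF, hiv⟩ := exists_two_natAbs_ge hFne (hinj n) (hvne n)
    have hin : i ≤ n := by
      rw [hF, Finset.mem_filter, Finset.mem_range] at hiF
      omega
    have hval : |birkhoffSum S fR i x| = ((birkhoffSum S f i x).natAbs : ℝ) := by
      rw [hfR, birkhoffSum_intCast, ← Int.cast_abs, Int.abs_eq_natAbs, Int.cast_natCast]
    have hchain : ((F n).card : ℝ) ≤ 2 * ((b/8) * n + D) := by
      have h1' : ((F n).card : ℝ) ≤ 2 * ((birkhoffSum S f i x).natAbs : ℝ) := by
        exact_mod_cast hiv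
      have h2' := habs n i hin
      rw [hval] at h2'
      linarith
    linarith
  -- conclude
  have : ∀ᵐ x ∂μ, x ∉ G := by
    rw [ae_iff]
    simpa using hG0
  filter_upwards [this] with x hx hxB
  simp only [hG, Set.mem_setOf_eq, not_and, not_forall] at hx
  obtain ⟨n, hn, hnB, hsum⟩ := hx hxB
  exact ⟨n, hn, hnB, by simpa using hsum⟩

end KA
end Hopf

/-- A metric space carrying a finite measure positive on nonempty open sets is
second countable. -/
lemma secondCountable_of_openPos {Y : Type*} [MetricSpace Y] [MeasurableSpace Y]
    [BorelSpace Y] (μ : Measure Y) [IsProbabilityMeasure μ]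
    (hopen : ∀ U : Set Y, IsOpen U → U.Nonempty → 0 < μ U) :
    SecondCountableTopology Y := by
  apply Metric.secondCountable_of_almost_dense_set
  intro ε hε
  -- a maximal `ε`-separated set
  have hchainU : ∀ c ⊆ {s : Set Y | ∀ x ∈ s, ∀ y ∈ s, x ≠ y → ε ≤ dist x y},
      IsChain (· ⊆ ·) c → ∃ ub ∈ {s : Set Y | ∀ x ∈ s, ∀ y ∈ s, x ≠ y → ε ≤ dist x y},
        ∀ s ∈ c, s ⊆ ub := by
    intro c hc hchain
    refine ⟨⋃₀ c, ?_, fun t ht => Set.subset_sUnion_of_mem ht⟩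
    intro x hx y hy hxy
    obtain ⟨t1, ht1, hxt1⟩ := hx
    obtain ⟨t2, ht2, hyt2⟩ := hy
    rcases eq_or_ne t1 t2 with rfl | hne
    · exact hc ht1 x hxt1 y hyt2 hxy
    rcases hchain ht1 ht2 hne with h | h
    · exact hc ht2 x (h hxt1) y hyt2 hxy
    · exact hc ht1 x hxt1 y (h hyt2) hxy
  obtain ⟨s, hsmax⟩ := zorn_subset _ hchainU
  refine ⟨s, ?_, ?_⟩
  · -- countability via disjoint balls of positive measure
    have hdisj : Pairwise (Function.onFun Disjoint
        (fun p : s => Metric.ball (p : Y) (ε/2))) := by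
      intro i j hij
      apply Metric.ball_disjoint_ball
      have hne : (i : Y) ≠ (j : Y) := fun h => hij (Subtype.ext h)
      have := hsmax.prop (i : Y) i.2 (j : Y) j.2 hne
      linarith
    have hmble : ∀ p : s, MeasurableSet (Metric.ball (p : Y) (ε/2)) :=
      fun p => Metric.isOpen_ball.measurableSet
    have hcnt := MeasureTheory.Measure.countable_meas_pos_of_disjoint_iUnion
      (μ := μ) hmble hdisj
    have : {i : s | 0 < μ (Metric.ball (i : Y) (ε/2))} = Set.univ := by
      ext p
      simp only [Set.mem_setOf_eq, Set.mem_univ, iff_true]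
      exact hopen _ Metric.isOpen_ball ⟨p, Metric.mem_ball_self (by linarith)⟩
    rw [this] at hcnt
    rw [Set.countable_univ_iff] at hcnt
    exact Set.countable_coe_iff.mp hcnt
  · -- maximality gives `ε`-density
    intro x
    by_contra hcon
    push_neg at hcon
    have hfar : ∀ y ∈ s, ε < dist x y := fun y hy => hcon y hy
    have hxs : x ∉ s := fun hx => by
      have := hfar x hx
      simp at this
      linarith
    have hmem : insert x s ∈ {s : Set Y | ∀ x ∈ s, ∀ y ∈ s, x ≠ y → ε ≤ dist x y} := by
      intro a ha b hb hab
      rcases ha with rfl | ha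
      · rcases hb with rfl | hb
        · exact absurd rfl hab
        · exact (hfar b hb).le
      · rcases hb with rfl | hb
        · rw [dist_comm]
          exact (hfar a ha).le
        · exact hsmax.prop a ha b hb hab
    have := hsmax.2 hmem (Set.subset_insert x s)
    exact hxs (this (Set.mem_insert x s))

section Skew

variable {X : Type*} [MeasurableSpace X] {μ : MeasureTheory.Measure X}
variable {S : X → X} {f : X → ℤ}

namespace KA

/-- The skew product over `S` with cocycle `f`. -/
def skew (S : X → X) (f : X → ℤ) : X × ℤ → X × ℤ := fun p => (S p.1, p.2 + f p.1)

/-- The invariant (infinite) measure on `X × ℤ`. -/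
noncomputable def skewMeasure (μ : Measure X) : Measure (X × ℤ) :=
  Measure.sum (fun j : ℤ => μ.map (fun x => (x, j)))

lemma measurable_pair (j : ℤ) : Measurable (fun x : X => (x, j)) :=
  measurable_id.prodMk measurable_const

lemma skewMeasure_apply {s : Set (X × ℤ)} (hs : MeasurableSet s) :
    skewMeasure μ s = ∑' j : ℤ, μ ((fun x => (x, j)) ⁻¹' s) := by
  rw [skewMeasure, Measure.sum_apply _ hs]
  congr 1
  ext j
  rw [Measure.map_apply (measurable_pair j) hs]

lemma measurable_skew (hSm : Measurable S) (hfm : Measurable f) :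
    Measurable (skew S f) :=
  (hSm.comp measurable_fst).prodMk (measurable_snd.add (hfm.comp measurable_fst))

lemma skew_iterate (n : ℕ) (x : X) (j : ℤ) :
    (skew S f)^[n] (x, j) = (S^[n] x, j + birkhoffSum S f n x) := by
  induction n generalizing x j with
  | zero => simp [birkhoffSum_zero]
  | succ n ih =>
    rw [Function.iterate_succ_apply, skew, ih (S x) (j + f x)]
    rw [← Function.iterate_succ_apply]
    rw [birkhoffSum_succ' S f n x]
    refine Prod.ext rfl ?_
    push_cast
    ring

lemma skew_qmp (hpres : MeasurePreserving S μ μ) (hSm : Measurable S) (hfm : Measurable f) :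
    Measure.QuasiMeasurePreserving (skew S f) (skewMeasure μ) (skewMeasure μ) := by
  refine ⟨measurable_skew hSm hfm, ?_⟩
  apply Measure.AbsolutelyContinuous.mk
  intro s hs h0
  rw [Measure.map_apply (measurable_skew hSm hfm) hs]
  have hslice : ∀ i : ℤ, μ ((fun x => (x, i)) ⁻¹' s) = 0 := by
    rw [skewMeasure_apply hs] at h0
    exact fun i => by
      have := ENNReal.tsum_eq_zero.mp h0 i
      exact this
  have hsliceM : ∀ i : ℤ, MeasurableSet ((fun x => (x, i)) ⁻¹' s) :=
    fun i => (measurable_pair i) hs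
  rw [skewMeasure_apply ((measurable_skew hSm hfm) hs)]
  apply ENNReal.tsum_eq_zero.mpr
  intro j
  apply measure_mono_null
    (t := ⋃ k : ℤ, (f ⁻¹' {k}) ∩ S ⁻¹' ((fun x => (x, j + k)) ⁻¹' s))
  · intro x hx
    refine Set.mem_iUnion.2 ⟨f x, rfl, ?_⟩
    exact hx
  · apply measure_iUnion_null
    intro k
    apply measure_mono_null Set.inter_subset_right
    rw [hpres.measure_preimage (hsliceM (j + k)).nullMeasurableSet]
    exact hslice (j + k)

lemma skew_conservative [IsProbabilityMeasure μ] (hS : Ergodic S μ) (hSm : Measurable S)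
    (hfm : Measurable f) (hfi : Integrable (fun x => (f x : ℝ)) μ)
    (hf0 : ∫ x, (f x : ℝ) ∂μ = 0) :
    Conservative (skew S f) (skewMeasure μ) := by
  refine ⟨skew_qmp hS.toMeasurePreserving hSm hfm, ?_⟩
  intro s hs h0
  obtain ⟨j, hj⟩ : ∃ j : ℤ, μ ((fun x => (x, j)) ⁻¹' s) ≠ 0 := by
    by_contra hcon
    push_neg at hcon
    rw [skewMeasure_apply hs] at h0
    exact h0 (ENNReal.tsum_eq_zero.mpr hcon)
  set B : Set X := (fun x => (x, j)) ⁻¹' s with hBdef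
  have hBm : MeasurableSet B := (measurable_pair j) hs
  have hret := atkinson_returns hS hSm hfm hfi hf0 hBm
  have hGE : μ (B ∩ {x | x ∈ B → ∃ n, 0 < n ∧ S^[n] x ∈ B ∧ birkhoffSum S f n x = 0}) = μ B := by
    apply measure_inter_conull
    rw [Set.compl_setOf]
    exact ae_iff.mp hret
  obtain ⟨x, hxB, hxP⟩ := nonempty_of_measure_ne_zero (by rw [hGE]; exact hj)
  obtain ⟨n, hn, hnB, hnsum⟩ := hxP hxB
  refine ⟨(x, j), hxB, n, by omega, ?_⟩
  rw [skew_iterate n x j, hnsum, add_zero]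
  exact hnB

end KA
end Skew

/-- **Topological Krygin–Atkinson theorem.** On a metric space with a Borel
probability measure giving positive mass to every nonempty open set, for an
ergodic invertible measure-preserving `S` and integrable zero-mean `f : X → ℤ`,
almost every `x` admits positive times `n_k → ∞` with `S^[n_k] x → x` and
vanishing Birkhoff sums. -/
theorem krygin_atkinson_topological {X : Type*} [MetricSpace X] [MeasurableSpace X]
    [BorelSpace X] (μ : Measure X) [IsProbabilityMeasure μ]
    (hopen : ∀ U : Set X, IsOpen U → U.Nonempty → 0 < μ U)
    (S : X ≃ᵐ X) (hS : Ergodic (⇑S) μ)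
    (f : X → ℤ) (hf : Measurable f)
    (hfi : Integrable (fun x => (f x : ℝ)) μ)
    (hf0 : ∫ x, (f x : ℝ) ∂μ = 0) :
    ∀ᵐ x ∂μ, ∃ n : ℕ → ℕ, (∀ k, 0 < n k) ∧
      Tendsto n atTop atTop ∧
      Tendsto (fun k => (⇑S)^[n k] x) atTop (𝓝 x) ∧
      ∀ k, ∑ i ∈ Finset.range (n k), f ((⇑S)^[i] x) = 0 := by
  haveI : SecondCountableTopology X := secondCountable_of_openPos μ hopen
  set T : X × ℤ → X × ℤ := KA.skew (⇑S) f with hT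
  have hcons : Conservative T (KA.skewMeasure μ) :=
    KA.skew_conservative hS S.measurable hf hfi hf0
  have hrec := hcons.ae_frequently_mem_of_mem_nhds
  obtain ⟨N, hsub, hNm, hN0⟩ := exists_measurable_superset_of_null (ae_iff.mp hrec)
  have hμN : μ ((fun x => (x, (0:ℤ))) ⁻¹' N) = 0 := by
    have hle : μ.map (fun x => (x, (0:ℤ))) N ≤ KA.skewMeasure μ N :=
      Measure.le_iff'.1 (Measure.le_sum _ 0) N
    rw [Measure.map_apply (KA.measurable_pair 0) hNm] at hle
    rw [hN0] at hle
    exact le_antisymm hle (zero_le')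
  have hae : ∀ᵐ x ∂μ, ∀ s ∈ 𝓝 ((x, (0:ℤ)) : X × ℤ), ∃ᶠ m in atTop, T^[m] (x, 0) ∈ s := by
    rw [ae_iff]
    apply measure_mono_null _ hμN
    intro x hx
    exact hsub hx
  filter_upwards [hae] with x hx
  have hQ : ∀ k : ℕ, ∃ m : ℕ, k + 1 ≤ m ∧ dist ((⇑S)^[m] x) x < 1/(k+1) ∧
      birkhoffSum (⇑S) f m x = 0 := by
    intro k
    have hball : Metric.ball x (1/(k+1)) ×ˢ ({(0:ℤ)} : Set ℤ) ∈ 𝓝 ((x, (0:ℤ)) : X × ℤ) := by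
      apply prod_mem_nhds (Metric.ball_mem_nhds x (by positivity))
      exact IsOpen.mem_nhds (isOpen_discrete _) rfl
    have hfreq := hx _ hball
    rw [Filter.frequently_atTop] at hfreq
    obtain ⟨m, hm, hmem⟩ := hfreq (k+1)
    rw [hT, KA.skew_iterate] at hmem
    obtain ⟨h1, h2⟩ := hmem
    rw [Set.mem_singleton_iff, zero_add] at h2
    exact ⟨m, hm, by simpa [Metric.mem_ball] using h1, h2⟩
  choose n hn1 hn2 hn3 using hQ
  refine ⟨n, fun k => lt_of_lt_of_le (Nat.succ_pos k) (hn1 k), ?_, ?_, fun k => hn3 k⟩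
  · exact tendsto_atTop_mono (fun k => le_trans (Nat.le_succ k) (hn1 k)) tendsto_id
  · rw [Metric.tendsto_atTop]
    intro ε hε
    obtain ⟨m, hm⟩ := exists_nat_one_div_lt hε
    refine ⟨m, fun k hk => ?_⟩
    refine lt_of_lt_of_le (hn2 k) (le_trans ?_ hm.le)
    apply one_div_le_one_div_of_le (by positivity)
    have : (m:ℝ) ≤ (k:ℝ) := by exact_mod_cast hk
    linarith
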